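/- The space of local derivations of the n-dimensional null-filiform associative algebra μ₀ⁿ has dimension n(n+1)/2 over ℂ. -/

import Mathlib

/-- basis vectors -/
noncomputable def e (n : ℕ) (i : Fin n) : Fin n → ℂ := Pi.single i 1

/-- product of the null-filiform algebra μ₀ⁿ (0-based indices: index a ↔ e_{a+1}) -/
noncomputable def mul0 (n : ℕ) (x y : Fin n → ℂ) : Fin n → ℂ :=
  fun k => ∑ i : Fin n, ∑ j : Fin n,
    if (i : ℕ) + (j : ℕ) + 1 = (k : ℕ) then x i * y j else 0

def IsDer {n : ℕ} (μ : (Fin n → ℂ) → (Fin n → ℂ) → Fin n → ℂ)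
    (D : (Fin n → ℂ) →ₗ[ℂ] (Fin n → ℂ)) : Prop :=
  ∀ x y, D (μ x y) = μ (D x) y + μ x (D y)

def IsLocDer {n : ℕ} (μ : (Fin n → ℂ) → (Fin n → ℂ) → Fin n → ℂ)
    (Δ : (Fin n → ℂ) →ₗ[ℂ] (Fin n → ℂ)) : Prop :=
  ∀ x, ∃ D, IsDer μ D ∧ Δ x = D x

/-- the submodule of derivations, given bilinearity of μ -/
noncomputable def derSubmodule (n : ℕ) (μ : (Fin n → ℂ) → (Fin n → ℂ) → Fin n → ℂ)
    (hal : ∀ x y z, μ (x + y) z = μ x z + μ y z)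
    (har : ∀ x y z, μ x (y + z) = μ x y + μ x z)
    (hsl : ∀ (c : ℂ) x y, μ (c • x) y = c • μ x y)
    (hsr : ∀ (c : ℂ) x y, μ x (c • y) = c • μ x y) :
    Submodule ℂ ((Fin n → ℂ) →ₗ[ℂ] (Fin n → ℂ)) where
  carrier := {D | IsDer μ D}
  zero_mem' := by
    intro x y
    have h1 : μ 0 y = 0 := by simpa using hsl 0 0 y
    have h2 : μ x 0 = 0 := by simpa using hsr 0 x 0
    simp [h1, h2]
  add_mem' := by
    intro D1 D2 h1 h2 x y
    simp only [LinearMap.add_apply, h1 x y, h2 x y, hal, har]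
    abel
  smul_mem' := by
    intro c D hD x y
    simp only [LinearMap.smul_apply, hD x y, smul_add, hsl, hsr]

/-- the submodule of local derivations, given bilinearity of μ -/
noncomputable def locDerSubmodule (n : ℕ) (μ : (Fin n → ℂ) → (Fin n → ℂ) → Fin n → ℂ)
    (hal : ∀ x y z, μ (x + y) z = μ x z + μ y z)
    (har : ∀ x y z, μ x (y + z) = μ x y + μ x z)
    (hsl : ∀ (c : ℂ) x y, μ (c • x) y = c • μ x y)
    (hsr : ∀ (c : ℂ) x y, μ x (c • y) = c • μ x y) :
    Submodule ℂ ((Fin n → ℂ) →ₗ[ℂ] (Fin n → ℂ)) where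
  carrier := {Δ | IsLocDer μ Δ}
  zero_mem' := by
    intro x
    exact ⟨0, (derSubmodule n μ hal har hsl hsr).zero_mem, rfl⟩
  add_mem' := by
    intro D1 D2 h1 h2 x
    obtain ⟨E1, hE1, he1⟩ := h1 x
    obtain ⟨E2, hE2, he2⟩ := h2 x
    exact ⟨E1 + E2, (derSubmodule n μ hal har hsl hsr).add_mem hE1 hE2, by
      simp [he1, he2]⟩
  smul_mem' := by
    intro c Δ hΔ x
    obtain ⟨E, hE, he⟩ := hΔ x
    exact ⟨c • E, (derSubmodule n μ hal har hsl hsr).smul_mem c hE, by simp [he]⟩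

lemma mul0_add_left (n : ℕ) (x y z : Fin n → ℂ) :
    mul0 n (x + y) z = mul0 n x z + mul0 n y z := by
  funext k
  simp only [mul0, Pi.add_apply]
  rw [← Finset.sum_add_distrib]
  refine Finset.sum_congr rfl fun i _ => ?_
  rw [← Finset.sum_add_distrib]
  refine Finset.sum_congr rfl fun j _ => ?_
  split <;> ring

lemma mul0_add_right (n : ℕ) (x y z : Fin n → ℂ) :
    mul0 n x (y + z) = mul0 n x y + mul0 n x z := by
  funext k
  simp only [mul0, Pi.add_apply]
  rw [← Finset.sum_add_distrib]
  refine Finset.sum_congr rfl fun i _ => ?_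
  rw [← Finset.sum_add_distrib]
  refine Finset.sum_congr rfl fun j _ => ?_
  split <;> ring

lemma mul0_smul_left (n : ℕ) (c : ℂ) (x y : Fin n → ℂ) :
    mul0 n (c • x) y = c • mul0 n x y := by
  funext k
  simp only [mul0, Pi.smul_apply, smul_eq_mul, Finset.mul_sum]
  refine Finset.sum_congr rfl fun i _ => ?_
  refine Finset.sum_congr rfl fun j _ => ?_
  split <;> ring

lemma mul0_smul_right (n : ℕ) (c : ℂ) (x y : Fin n → ℂ) :
    mul0 n x (c • y) = c • mul0 n x y := by
  funext k
  simp only [mul0, Pi.smul_apply, smul_eq_mul, Finset.mul_sum]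
  refine Finset.sum_congr rfl fun i _ => ?_
  refine Finset.sum_congr rfl fun j _ => ?_
  split <;> ring



lemma sum_fin_eq_dite {n : ℕ} (m : ℕ) (f : Fin n → ℂ) :
    (∑ a : Fin n, if (a : ℕ) = m then f a else 0)
      = if h : m < n then f ⟨m, h⟩ else 0 := by
  by_cases h : m < n
  · rw [dif_pos h, Fintype.sum_eq_single (⟨m, h⟩ : Fin n)]
    · simp
    · intro a ha
      exact if_neg fun hc => ha (Fin.ext hc)
  · rw [dif_neg h]
    refine Finset.sum_eq_zero fun a _ => by rw [if_neg]; exact fun hc => h (hc ▸ a.isLt)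

lemma basis_expand (n : ℕ) (x : Fin n → ℂ) : x = ∑ i : Fin n, x i • e n i := by
  funext k
  simp [e, Finset.sum_apply, Pi.single_apply]

lemma mul0_e_e {n : ℕ} (u v s : Fin n) :
    mul0 n (e n u) (e n v) s = if (u:ℕ) + (v:ℕ) + 1 = (s:ℕ) then 1 else 0 := by
  rw [mul0, Fintype.sum_eq_single u]
  · rw [Fintype.sum_eq_single v]
    · simp [e]
    · intro j hj
      simp [e, Pi.single_eq_of_ne hj]
  · intro i hi
    refine Finset.sum_eq_zero fun j _ => ?_
    simp [e, Pi.single_eq_of_ne hi]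

lemma mul0_apply_e_right {n : ℕ} (z : Fin n → ℂ) (v s : Fin n) :
    mul0 n z (e n v) s = ∑ i : Fin n, if (i:ℕ) + (v:ℕ) + 1 = (s:ℕ) then z i else 0 := by
  rw [mul0]
  refine Finset.sum_congr rfl fun i _ => ?_
  rw [Fintype.sum_eq_single v]
  · simp [e]
  · intro j hj
    simp [e, Pi.single_eq_of_ne hj]

lemma mul0_e_left_apply {n : ℕ} (u : Fin n) (w : Fin n → ℂ) (s : Fin n) :
    mul0 n (e n u) w s = ∑ j : Fin n, if (u:ℕ) + (j:ℕ) + 1 = (s:ℕ) then w j else 0 := by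
  rw [mul0, Fintype.sum_eq_single u]
  · simp [e]
  · intro i hi
    refine Finset.sum_eq_zero fun j _ => ?_
    simp [e, Pi.single_eq_of_ne hi]

noncomputable def Db (n : ℕ) (b : Fin n → ℂ) : (Fin n → ℂ) →ₗ[ℂ] (Fin n → ℂ) where
  toFun x := fun s => ∑ a : Fin n, ∑ t : Fin n,
    if (a : ℕ) + (t : ℕ) = (s : ℕ) then (((a : ℕ) : ℂ) + 1) * b t * x a else 0
  map_add' x y := by
    funext s
    simp only [Pi.add_apply]
    rw [← Finset.sum_add_distrib]
    refine Finset.sum_congr rfl fun a _ => ?_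
    rw [← Finset.sum_add_distrib]
    refine Finset.sum_congr rfl fun t _ => ?_
    split <;> ring
  map_smul' c x := by
    funext s
    simp only [RingHom.id_apply, Pi.smul_apply, smul_eq_mul, Finset.mul_sum]
    refine Finset.sum_congr rfl fun a _ => ?_
    refine Finset.sum_congr rfl fun t _ => ?_
    split <;> ring

lemma Db_apply (n : ℕ) (b : Fin n → ℂ) (x : Fin n → ℂ) (s : Fin n) :
    Db n b x s = ∑ a : Fin n, ∑ t : Fin n,
      if (a : ℕ) + (t : ℕ) = (s : ℕ) then (((a : ℕ) : ℂ) + 1) * b t * x a else 0 := rfl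

lemma Db_zero (n : ℕ) (x : Fin n → ℂ) : Db n 0 x = 0 := by
  funext s
  rw [Db_apply]
  simp

lemma Db_add_smul (n : ℕ) (b c : Fin n → ℂ) (k : ℂ) (x : Fin n → ℂ) :
    Db n (b + k • c) x = Db n b x + k • Db n c x := by
  funext s
  simp only [Pi.add_apply, Pi.smul_apply, smul_eq_mul, Db_apply, Finset.mul_sum]
  rw [← Finset.sum_add_distrib]
  refine Finset.sum_congr rfl fun a _ => ?_
  rw [← Finset.sum_add_distrib]
  refine Finset.sum_congr rfl fun t _ => ?_
  split <;> ring

lemma Db_single (n : ℕ) (u : Fin n) (x : Fin n → ℂ) (s : Fin n) :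
    Db n (Pi.single u 1) x s
      = ∑ a : Fin n, if (a : ℕ) + (u : ℕ) = (s : ℕ) then (((a : ℕ) : ℂ) + 1) * x a else 0 := by
  rw [Db_apply]
  refine Finset.sum_congr rfl fun a _ => ?_
  rw [Fintype.sum_eq_single u]
  · simp
  · intro t ht
    simp [Pi.single_eq_of_ne ht]

lemma Db_e (n : ℕ) (b : Fin n → ℂ) (a s : Fin n) :
    Db n b (e n a) s
      = ∑ t : Fin n, if (a : ℕ) + (t : ℕ) = (s : ℕ) then (((a : ℕ) : ℂ) + 1) * b t else 0 := by
  rw [Db_apply, Fintype.sum_eq_single a]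
  · simp [e]
  · intro i hi
    refine Finset.sum_eq_zero fun t _ => ?_
    simp [e, Pi.single_eq_of_ne hi]

noncomputable def mulL (n : ℕ) : (Fin n → ℂ) →ₗ[ℂ] (Fin n → ℂ) →ₗ[ℂ] (Fin n → ℂ) :=
  LinearMap.mk₂ ℂ (mul0 n) (mul0_add_left n) (mul0_smul_left n) (mul0_add_right n)
    (mul0_smul_right n)

lemma isDer_of_basis {n : ℕ} (D : (Fin n → ℂ) →ₗ[ℂ] (Fin n → ℂ))
    (h : ∀ i j : Fin n, D (mul0 n (e n i) (e n j))
      = mul0 n (D (e n i)) (e n j) + mul0 n (e n i) (D (e n j))) :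
    IsDer (mul0 n) D := by
  intro x y
  have hx := basis_expand n x
  have hy := basis_expand n y
  show D (mulL n x y) = mulL n (D x) y + mulL n x (D y)
  rw [hx, hy]
  simp only [map_sum, map_smul, LinearMap.sum_apply, LinearMap.smul_apply]
  rw [← Finset.sum_add_distrib]
  refine Finset.sum_congr rfl fun i _ => ?_
  simp only [map_sum, map_smul, LinearMap.sum_apply, LinearMap.smul_apply, Finset.smul_sum,
    ← Finset.sum_add_distrib]
  refine Finset.sum_congr rfl fun j _ => ?_
  have hij : (mulL n) (e n i) (e n j) = mul0 n (e n i) (e n j) := rfl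
  rw [← smul_add, ← smul_add]
  congr 1
  congr 1
  show D (mul0 n (e n j) (e n i)) = mul0 n (D (e n j)) (e n i) + mul0 n (e n j) (D (e n i))
  exact h j i

lemma Db_mul0_e_e (n : ℕ) (b : Fin n → ℂ) (i j s : Fin n) :
    Db n b (mul0 n (e n i) (e n j)) s
      = ∑ t : Fin n, if (i:ℕ) + (j:ℕ) + 1 + (t:ℕ) = (s:ℕ)
          then (((i:ℕ) : ℂ) + ((j:ℕ) : ℂ) + 2) * b t else 0 := by
  rw [Db_apply, Finset.sum_comm]
  refine Finset.sum_congr rfl fun t _ => ?_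
  have step : ∀ a : Fin n,
      (if (a:ℕ) + (t:ℕ) = (s:ℕ) then (((a:ℕ):ℂ) + 1) * b t * mul0 n (e n i) (e n j) a else 0)
        = (if (a:ℕ) = (i:ℕ) + (j:ℕ) + 1
            then (if (a:ℕ) + (t:ℕ) = (s:ℕ) then (((a:ℕ):ℂ) + 1) * b t else 0) else 0) := by
    intro a
    rw [mul0_e_e]
    split_ifs <;> first | rfl | (exfalso; omega) | ring
  rw [Finset.sum_congr rfl fun a _ => step a, sum_fin_eq_dite]
  have hs := s.isLt
  split_ifs with h1 h2 h3 <;> first | rfl | (exfalso; omega) | (push_cast [Fin.val_mk]; ring)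

lemma mul0_Db_e_left (n : ℕ) (b : Fin n → ℂ) (i j s : Fin n) :
    mul0 n (Db n b (e n i)) (e n j) s
      = ∑ t : Fin n, if (i:ℕ) + (t:ℕ) + (j:ℕ) + 1 = (s:ℕ)
          then (((i:ℕ) : ℂ) + 1) * b t else 0 := by
  rw [mul0_apply_e_right]
  have step : ∀ a : Fin n,
      (if (a:ℕ) + (j:ℕ) + 1 = (s:ℕ) then Db n b (e n i) a else 0)
        = ∑ t : Fin n, if (a:ℕ) = (i:ℕ) + (t:ℕ)
            then (if (i:ℕ) + (t:ℕ) + (j:ℕ) + 1 = (s:ℕ) then (((i:ℕ):ℂ) + 1) * b t else 0)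
            else 0 := by
    intro a
    by_cases h : (a:ℕ) + (j:ℕ) + 1 = (s:ℕ)
    · rw [if_pos h, Db_e]
      refine Finset.sum_congr rfl fun t _ => ?_
      split_ifs <;> first | rfl | (exfalso; omega) | ring
    · rw [if_neg h]
      symm
      refine Finset.sum_eq_zero fun t _ => ?_
      split_ifs <;> first | rfl | (exfalso; omega)
  rw [Finset.sum_congr rfl fun a _ => step a, Finset.sum_comm]
  refine Finset.sum_congr rfl fun t _ => ?_
  rw [sum_fin_eq_dite]
  have hs := s.isLt
  split_ifs <;> first | rfl | (exfalso; omega)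

lemma mul0_Db_e_right (n : ℕ) (b : Fin n → ℂ) (i j s : Fin n) :
    mul0 n (e n i) (Db n b (e n j)) s
      = ∑ t : Fin n, if (i:ℕ) + ((j:ℕ) + (t:ℕ)) + 1 = (s:ℕ)
          then (((j:ℕ) : ℂ) + 1) * b t else 0 := by
  rw [mul0_e_left_apply]
  have step : ∀ a : Fin n,
      (if (i:ℕ) + (a:ℕ) + 1 = (s:ℕ) then Db n b (e n j) a else 0)
        = ∑ t : Fin n, if (a:ℕ) = (j:ℕ) + (t:ℕ)
            then (if (i:ℕ) + ((j:ℕ) + (t:ℕ)) + 1 = (s:ℕ) then (((j:ℕ):ℂ) + 1) * b t else 0)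
            else 0 := by
    intro a
    by_cases h : (i:ℕ) + (a:ℕ) + 1 = (s:ℕ)
    · rw [if_pos h, Db_e]
      refine Finset.sum_congr rfl fun t _ => ?_
      split_ifs <;> first | rfl | (exfalso; omega) | ring
    · rw [if_neg h]
      symm
      refine Finset.sum_eq_zero fun t _ => ?_
      split_ifs <;> first | rfl | (exfalso; omega)
  rw [Finset.sum_congr rfl fun a _ => step a, Finset.sum_comm]
  refine Finset.sum_congr rfl fun t _ => ?_
  rw [sum_fin_eq_dite]
  have hs := s.isLt
  split_ifs <;> first | rfl | (exfalso; omega)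

lemma Db_isDer (n : ℕ) (b : Fin n → ℂ) : IsDer (mul0 n) (Db n b) := by
  refine isDer_of_basis (Db n b) fun i j => ?_
  funext s
  rw [Pi.add_apply, Db_mul0_e_e, mul0_Db_e_left, mul0_Db_e_right, ← Finset.sum_add_distrib]
  refine Finset.sum_congr rfl fun t _ => ?_
  split_ifs <;> first | rfl | (exfalso; omega) | ring

lemma der_tri {n : ℕ} (D : (Fin n → ℂ) →ₗ[ℂ] (Fin n → ℂ)) (hD : IsDer (mul0 n) D) :
    ∀ (a s : Fin n), (s:ℕ) < (a:ℕ) → D (e n a) s = 0 := by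
  suffices h : ∀ k : ℕ, ∀ a : Fin n, (a:ℕ) = k → ∀ s : Fin n, (s:ℕ) < k → D (e n a) s = 0 by
    exact fun a s hs => h (a:ℕ) a rfl s hs
  intro k
  induction k with
  | zero => intro a _ s hs; omega
  | succ k IH =>
    intro a ha s hs
    have hk : k < n := by have := a.isLt; omega
    have h0 : 0 < n := by omega
    have hprod : mul0 n (e n ⟨0, h0⟩) (e n ⟨k, hk⟩) = e n a := by
      funext s'
      rw [mul0_e_e]
      have : e n a s' = if (s':ℕ) = (a:ℕ) then 1 else 0 := by
        simp [e, Pi.single_apply, Fin.ext_iff]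
      rw [this]
      simp only [Fin.val_mk]
      split_ifs <;> first | rfl | (exfalso; omega)
    have := hD (e n ⟨0, h0⟩) (e n ⟨k, hk⟩)
    rw [hprod] at this
    rw [this, Pi.add_apply, mul0_apply_e_right, mul0_e_left_apply]
    have h1 : (∑ i : Fin n, if (i:ℕ) + (⟨k, hk⟩ : Fin n) + 1 = (s:ℕ)
        then D (e n ⟨0, h0⟩) i else 0) = 0 := by
      refine Finset.sum_eq_zero fun i _ => ?_
      rw [if_neg]
      simp only [Fin.val_mk]
      omega
    have h2 : (∑ j : Fin n, if ((⟨0, h0⟩ : Fin n) : ℕ) + (j:ℕ) + 1 = (s:ℕ)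
        then D (e n ⟨k, hk⟩) j else 0) = 0 := by
      refine Finset.sum_eq_zero fun j _ => ?_
      split_ifs with hc
      · exact IH ⟨k, hk⟩ rfl j (by simp only [Fin.val_mk] at hc; omega)
      · rfl
    rw [h1, h2, add_zero]

lemma exists_b {n : ℕ} (x r : Fin n → ℂ) (m : Fin n) (hm : x m ≠ 0)
    (hx : ∀ a : Fin n, (a:ℕ) < (m:ℕ) → x a = 0)
    (hr : ∀ s : Fin n, (s:ℕ) < (m:ℕ) → r s = 0) :
    ∃ b : Fin n → ℂ, Db n b x = r := by
  have key : ∀ u : ℕ, ∃ b : Fin n → ℂ,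
      ∀ s : Fin n, (s:ℕ) < (m:ℕ) + u → Db n b x s = r s := by
    intro u
    induction u with
    | zero =>
      refine ⟨0, fun s hs => ?_⟩
      rw [Db_zero, Pi.zero_apply, hr s (by omega)]
    | succ u IH =>
      obtain ⟨b, hb⟩ := IH
      by_cases h : (m:ℕ) + u < n
      · set s0 : Fin n := ⟨(m:ℕ) + u, h⟩ with hs0
        have hu : u < n := by omega
        set u' : Fin n := ⟨u, hu⟩ with hu'
        set d : ℂ := (((m:ℕ) : ℂ) + 1) * x m with hd
        have hdne : d ≠ 0 := mul_ne_zero (by exact Nat.cast_add_one_ne_zero (m:ℕ)) hm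
        set δ : ℂ := r s0 - Db n b x s0 with hδ
        refine ⟨b + (δ / d) • (Pi.single u' 1 : Fin n → ℂ), fun s hs => ?_⟩
        rw [Db_add_smul, Pi.add_apply, Pi.smul_apply, smul_eq_mul, Db_single]
        rcases Nat.lt_or_ge (s:ℕ) ((m:ℕ) + u) with hlt | hge
        · have hzero : (∑ a : Fin n, if (a:ℕ) + (u':ℕ) = (s:ℕ)
              then (((a:ℕ):ℂ) + 1) * x a else 0) = 0 := by
            refine Finset.sum_eq_zero fun a _ => ?_
            split_ifs with hc
            · rw [hx a (by simp only [hu', Fin.val_mk] at hc; omega), mul_zero]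
            · rfl
          rw [hzero, mul_zero, add_zero]
          exact hb s hlt
        · have hseq : (s:ℕ) = (m:ℕ) + u := by omega
          have hss0 : s = s0 := Fin.ext (by rw [hseq, hs0])
          have hsum : (∑ a : Fin n, if (a:ℕ) + (u':ℕ) = (s:ℕ)
              then (((a:ℕ):ℂ) + 1) * x a else 0) = d := by
            rw [Fintype.sum_eq_single m]
            · rw [if_pos (by simp only [hu', Fin.val_mk]; omega)]
            · intro a ha
              rw [if_neg]
              simp only [hu', Fin.val_mk]
              have : (a:ℕ) ≠ (m:ℕ) := fun hc => ha (Fin.ext hc)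
              omega
          rw [hsum, hss0, div_mul_cancel₀ _ hdne]
          ring
      · exact ⟨b, fun s hs => hb s (by have := s.isLt; omega)⟩
  obtain ⟨b, hb⟩ := key n
  exact ⟨b, funext fun s => hb s (by have := s.isLt; omega)⟩

/-- triangular maps -/
noncomputable def T (n : ℕ) : Submodule ℂ ((Fin n → ℂ) →ₗ[ℂ] (Fin n → ℂ)) where
  carrier := {Δ | ∀ a s : Fin n, (s:ℕ) < (a:ℕ) → Δ (e n a) s = 0}
  zero_mem' := by intro a s _; simp
  add_mem' := by
    intro Δ₁ Δ₂ h1 h2 a s hs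
    simp [LinearMap.add_apply, h1 a s hs, h2 a s hs]
  smul_mem' := by
    intro c Δ hΔ a s hs
    simp [LinearMap.smul_apply, hΔ a s hs]

def Sidx (n : ℕ) := {p : Fin n × Fin n // (p.2 : ℕ) ≤ (p.1 : ℕ)}

instance (n : ℕ) : Fintype (Sidx n) := by unfold Sidx; infer_instance

noncomputable def matrixOfL (n : ℕ) : (Sidx n → ℂ) →ₗ[ℂ] Matrix (Fin n) (Fin n) ℂ where
  toFun c := Matrix.of fun s a => if h : (a:ℕ) ≤ (s:ℕ) then c ⟨(s, a), h⟩ else 0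
  map_add' c d := by
    funext s a
    show (if h : (a:ℕ) ≤ (s:ℕ) then (c + d) ⟨(s, a), h⟩ else 0)
      = (if h : (a:ℕ) ≤ (s:ℕ) then c ⟨(s, a), h⟩ else 0)
        + (if h : (a:ℕ) ≤ (s:ℕ) then d ⟨(s, a), h⟩ else 0)
    split_ifs with h
    · rfl
    · simp
  map_smul' k c := by
    funext s a
    show (if h : (a:ℕ) ≤ (s:ℕ) then (k • c) ⟨(s, a), h⟩ else 0)
      = k • (if h : (a:ℕ) ≤ (s:ℕ) then c ⟨(s, a), h⟩ else 0)
    split_ifs with h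
    · rfl
    · simp

noncomputable def Fmap (n : ℕ) : (Sidx n → ℂ) →ₗ[ℂ] ((Fin n → ℂ) →ₗ[ℂ] (Fin n → ℂ)) :=
  (Matrix.toLin' : Matrix (Fin n) (Fin n) ℂ ≃ₗ[ℂ] _).toLinearMap ∘ₗ matrixOfL n

lemma Fmap_e (n : ℕ) (c : Sidx n → ℂ) (a s : Fin n) :
    Fmap n c (e n a) s = if h : (a:ℕ) ≤ (s:ℕ) then c ⟨(s, a), h⟩ else 0 := by
  show Matrix.toLin' (matrixOfL n c) (e n a) s = _
  rw [Matrix.toLin'_apply]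
  show ((matrixOfL n c).mulVec (Pi.single a 1)) s = _
  rw [Matrix.mulVec_single]
  simp [matrixOfL]

noncomputable def Gmap (n : ℕ) : ((Fin n → ℂ) →ₗ[ℂ] (Fin n → ℂ)) →ₗ[ℂ] (Sidx n → ℂ) where
  toFun Δ p := Δ (e n p.1.2) p.1.1
  map_add' Δ₁ Δ₂ := by funext p; simp
  map_smul' k Δ := by funext p; simp

lemma Fmap_mem_T (n : ℕ) (c : Sidx n → ℂ) : Fmap n c ∈ T n := by
  intro a s hs
  rw [Fmap_e, dif_neg (by omega)]

lemma Gmap_Fmap (n : ℕ) (c : Sidx n → ℂ) : Gmap n (Fmap n c) = c := by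
  funext p
  show Fmap n c (e n p.1.2) p.1.1 = c p
  rw [Fmap_e, dif_pos p.2]
  exact congrArg c (Subtype.ext Prod.mk.eta)

lemma Fmap_Gmap (n : ℕ) (Δ : (Fin n → ℂ) →ₗ[ℂ] (Fin n → ℂ)) (hΔ : Δ ∈ T n) :
    Fmap n (Gmap n Δ) = Δ := by
  apply Module.Basis.ext (Pi.basisFun ℂ (Fin n))
  intro a
  have hb : (Pi.basisFun ℂ (Fin n)) a = e n a := by
    simp [e, Pi.basisFun_apply]
  rw [hb]
  funext s
  rw [Fmap_e]
  split_ifs with h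
  · rfl
  · exact (hΔ a s (by omega)).symm

noncomputable def Teqv (n : ℕ) : ↥(T n) ≃ₗ[ℂ] (Sidx n → ℂ) :=
  LinearEquiv.ofLinear (Gmap n ∘ₗ (T n).subtype)
    ((Fmap n).codRestrict (T n) (Fmap_mem_T n))
    (LinearMap.ext fun c => Gmap_Fmap n c)
    (LinearMap.ext fun Δ => Subtype.ext (Fmap_Gmap n Δ.1 Δ.2))

def sidxEquiv (n : ℕ) : Sidx n ≃ (Σ s : Fin n, Fin ((s:ℕ) + 1)) where
  toFun p := ⟨p.1.1, ⟨(p.1.2 : ℕ), Nat.lt_succ_of_le p.2⟩⟩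
  invFun q := ⟨(q.1, ⟨(q.2 : ℕ), by have h1 := q.2.isLt; have h2 := q.1.isLt; omega⟩),
    by exact Nat.lt_succ_iff.mp q.2.isLt⟩
  left_inv p := by
    apply Subtype.ext
    apply Prod.ext
    · rfl
    · apply Fin.ext; rfl
  right_inv q := by
    apply Sigma.ext
    · rfl
    · apply heq_of_eq; apply Fin.ext; rfl

lemma card_Sidx (n : ℕ) : Fintype.card (Sidx n) * 2 = n * (n + 1) := by
  rw [Fintype.card_congr (sidxEquiv n), Fintype.card_sigma]
  simp only [Fintype.card_fin]
  rw [Fin.sum_univ_eq_sum_range (fun k => k + 1) n, Finset.sum_add_distrib,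
    Finset.sum_const, Finset.card_range, smul_eq_mul, mul_one, add_mul]
  rw [Finset.sum_range_id_mul_two]
  cases n with
  | zero => rfl
  | succ k =>
    simp only [Nat.add_sub_cancel]
    ring

lemma finrank_T (n : ℕ) : Module.finrank ℂ ↥(T n) * 2 = n * (n + 1) := by
  rw [(Teqv n).finrank_eq, Module.finrank_fintype_fun_eq_card]
  exact card_Sidx n

theorem stmt8 (n : ℕ) (hn : 0 < n) :
    Module.finrank ℂ
      (locDerSubmodule n (mul0 n) (mul0_add_left n) (mul0_add_right n)
        (mul0_smul_left n) (mul0_smul_right n)) = n * (n + 1) / 2 := by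
  have hEq : locDerSubmodule n (mul0 n) (mul0_add_left n) (mul0_add_right n)
      (mul0_smul_left n) (mul0_smul_right n) = T n := by
    apply le_antisymm
    · intro Δ hΔ
      have hΔ' : IsLocDer (mul0 n) Δ := hΔ
      intro a s hs
      obtain ⟨D, hD, hDa⟩ := hΔ' (e n a)
      rw [hDa]
      exact der_tri D hD a s hs
    · intro Δ hΔ
      have hΔ' : ∀ a s : Fin n, (s:ℕ) < (a:ℕ) → Δ (e n a) s = 0 := hΔ
      intro x
      by_cases hx0 : x = 0
      · exact ⟨Db n 0, Db_isDer n 0, by rw [hx0, map_zero, map_zero]⟩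
      · set Fs := Finset.univ.filter (fun a : Fin n => x a ≠ 0) with hFsdef
        have hne : Fs.Nonempty := by
          rcases Function.ne_iff.mp hx0 with ⟨a, ha⟩
          exact ⟨a, by simp [hFsdef]; exact ha⟩
        set m := Fs.min' hne with hmdef
        have hm : x m ≠ 0 := by
          have h := Fs.min'_mem hne
          simp only [hFsdef, Finset.mem_filter, Finset.mem_univ, true_and] at h
          exact h
        have hxa : ∀ a : Fin n, (a:ℕ) < (m:ℕ) → x a = 0 := by
          intro a ha
          by_contra hcon
          have hmem : a ∈ Fs := by simp [hFsdef]; exact hcon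
          have hle := Fs.min'_le a hmem
          rw [Fin.le_def] at hle
          omega
        have hr : ∀ s : Fin n, (s:ℕ) < (m:ℕ) → Δ x s = 0 := by
          intro s hs
          conv_lhs => rw [basis_expand n x]
          rw [map_sum, Finset.sum_apply]
          refine Finset.sum_eq_zero fun a _ => ?_
          rw [map_smul, Pi.smul_apply, smul_eq_mul]
          by_cases hc : (s:ℕ) < (a:ℕ)
          · rw [hΔ' a s hc, mul_zero]
          · rw [hxa a (by omega), zero_mul]
        obtain ⟨b, hb⟩ := exists_b x (Δ x) m hm hxa hr
        exact ⟨Db n b, Db_isDer n b, hb.symm⟩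
  rw [hEq]
  have h2 := finrank_T n
  omega
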